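/- Pigeonhole periodicity: Let f : ℕ → F where F is a finite set. Then there exist r < r' ≤ #F such that f(r) = f(r'). Consequently, if G : ℕ → ℕ is a Nim sequence over an additively periodic (Y_x) with period p and difference bounds Mu, Mo, associating to each r ∈ ℕ the pair of difference-translated cut sets (d(S_{x+rp}), d(T_{x+rp})), which takes at most C(|Mu|+Mo, min(|Mu|, Mo)) values, then G is additively periodic with period length at most C(|Mu|+Mo, min(|Mu|, Mo)) · p. -/

import Mathlib

private lemma sup_mem_of_ne {s : Finset ℕ} (a : ℕ) (ha : a ∈ s) : a ≤ s.sup id :=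
  Finset.le_sup (f := id) ha

/-- a nonincreasing (from `W` on) `ℕ`-valued function is eventually constant -/
private lemma ev_const (g : ℕ → ℕ) (W : ℕ) (h : ∀ x, W ≤ x → g (x + 1) ≤ g x) :
    ∃ x3, W ≤ x3 ∧ ∀ x, x3 ≤ x → g x = g x3 := by
  have mono : ∀ a b, W ≤ a → a ≤ b → g b ≤ g a := by
    intro a b ha hab
    induction b, hab using Nat.le_induction with
    | base => exact le_rfl
    | succ b hb ih => exact le_trans (h b (le_trans ha hb)) ih
  have hmem : sInf {k | ∃ x, W ≤ x ∧ g x = k} ∈ {k | ∃ x, W ≤ x ∧ g x = k} :=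
    Nat.sInf_mem ⟨g W, W, le_rfl, rfl⟩
  obtain ⟨x3, hx3W, hx3⟩ := hmem
  refine ⟨x3, hx3W, fun x hx => le_antisymm ?_ ?_⟩
  · exact mono x3 x hx3W hx
  · rw [hx3]; exact Nat.sInf_le ⟨x, le_trans hx3W hx, rfl⟩

/-- pigeonhole, and its consequence that a Nim sequence over an
additively periodic `(Y_x)` with difference bounds `Mu, Mo` is additively
periodic with period length at most `C(|Mu|+Mo, min(|Mu|,Mo)) · p`. -/
theorem pigeonhole_periodicity
    {F : Type*} [Fintype F] (f : ℕ → F)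
    (Y : ℕ → Finset ℤ) (p : ℕ) (hp : 1 ≤ p)
    (hper : ∀ x : ℕ, Y (x + p) = (Y x).image (· + (p : ℤ)))
    (Mu Mo : ℤ) (hMu : Mu < 0) (hMo : 0 < Mo)
    (hbound : ∀ x : ℕ, ∀ y ∈ Y x, Mu + 1 ≤ y - (x : ℤ) ∧ y - (x : ℤ) ≤ Mo - 1)
    (L : ℕ) (G : ℕ → ℕ) (hbij : Function.Bijective G)
    (hG : ∀ x : ℕ, L ≤ x →
      G x = sInf {n : ℕ | (∀ x' < x, G x' ≠ n) ∧ (n : ℤ) ∉ Y x}) :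
    (∃ r r' : ℕ, r < r' ∧ r' ≤ Fintype.card F ∧ f r = f r') ∧
    (∃ P q : ℕ, 1 ≤ q ∧
      q ≤ Nat.choose (Mu.natAbs + Mo.toNat) (min Mu.natAbs Mo.toNat) * p ∧
      ∀ x : ℕ, P ≤ x → G (x + q) = G x + q) := by
  classical
  constructor
  · -- part 1 : the pigeonhole statement
    have hcard : (Finset.univ : Finset F).card < (Finset.range (Fintype.card F + 1)).card := by
      simp
    obtain ⟨a, ha, b, hb, hab, hfab⟩ :=
      Finset.exists_ne_map_eq_of_card_lt_of_maps_to hcard (fun a _ => Finset.mem_univ (f a))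
    rw [Finset.mem_range] at ha hb
    rcases lt_or_gt_of_ne hab with h | h
    · exact ⟨a, b, h, by omega, hfab⟩
    · exact ⟨b, a, h, by omega, hfab.symm⟩
  · -- part 2 : periodicity of the Nim sequence
    set A := Mu.natAbs with hAdef
    set B := Mo.toNat with hBdef
    have hA : (A : ℤ) = -Mu := by omega
    have hB : (B : ℤ) = Mo := by omega
    have hA1 : 1 ≤ A := by omega
    have hB1 : 1 ≤ B := by omega
    have hGinj : Function.Injective G := hbij.1
    -- ℕ-versions of the bounds on Y
    have hY_up : ∀ x n : ℕ, (n : ℤ) ∈ Y x → n < x + B := by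
      intro x n hn
      have := (hbound x _ hn).2
      omega
    have hY_low : ∀ x n : ℕ, (n : ℤ) ∈ Y x → x < n + A := by
      intro x n hn
      have := (hbound x _ hn).1
      omega
    have hYcard : ∀ x : ℕ, (Y x).card ≤ A + B := by
      intro x
      have hsub : Y x ⊆ Finset.Icc ((x : ℤ) - A + 1) ((x : ℤ) + B - 1) := by
        intro y hy
        have h1 := (hbound x y hy).1
        have h2 := (hbound x y hy).2
        simp only [Finset.mem_Icc]
        omega
      calc (Y x).card ≤ (Finset.Icc ((x : ℤ) - A + 1) ((x : ℤ) + B - 1)).card :=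
            Finset.card_le_card hsub
        _ = (((x : ℤ) + B - 1) + 1 - ((x : ℤ) - A + 1)).toNat := Int.card_Icc _ _
        _ ≤ A + B := by omega
    -- the mex set and its basic properties
    have hSne : ∀ x : ℕ, {n : ℕ | (∀ x' < x, G x' ≠ n) ∧ (n : ℤ) ∉ Y x}.Nonempty := by
      intro x
      set E := ((Finset.range x).image G) ∪ ((Y x).image Int.toNat) with hE
      refine ⟨E.sup id + 1, ?_, ?_⟩
      · intro a ha hGa
        have : G a ∈ E := Finset.mem_union_left _
          (Finset.mem_image.mpr ⟨a, Finset.mem_range.mpr ha, rfl⟩)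
        have := sup_mem_of_ne _ this
        omega
      · intro hmem
        have : (((E.sup id + 1 : ℕ) : ℤ)).toNat ∈ E := Finset.mem_union_right _
          (Finset.mem_image.mpr ⟨_, hmem, rfl⟩)
        rw [Int.toNat_natCast] at this
        have := sup_mem_of_ne _ this
        omega
    have hGmem : ∀ x : ℕ, L ≤ x → (∀ x' < x, G x' ≠ G x) ∧ ((G x : ℤ) ∉ Y x) := by
      intro x hx
      rw [hG x hx]
      exact Nat.sInf_mem (hSne x)
    have hGleast : ∀ x : ℕ, L ≤ x → ∀ m < G x, (∃ a < x, G a = m) ∨ (m : ℤ) ∈ Y x := by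
      intro x hx m hm
      rw [hG x hx] at hm
      have := Nat.notMem_of_lt_sInf hm
      simp only [Set.mem_setOf_eq, not_and_or, not_forall, not_not] at this
      rcases this with h | h
      · obtain ⟨a, ha, h⟩ := h
        exact Or.inl ⟨a, ha, h⟩
      · exact Or.inr h
    -- global upper bound on G
    set C := A + B + 1 + (∑ i ∈ Finset.range L, G i) with hCdef
    have hC1 : 1 ≤ C := by omega
    have hCup : ∀ x : ℕ, G x < x + C := by
      intro x
      rcases lt_or_ge x L with hx | hx
      · have : G x ≤ ∑ i ∈ Finset.range L, G i :=
          Finset.single_le_sum (f := G) (fun i _ => Nat.zero_le _) (Finset.mem_range.mpr hx)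
        omega
      · set E := ((Finset.range x).image G) ∪ ((Y x).image Int.toNat) with hE
        have hEcard : E.card ≤ x + (A + B) := by
          calc E.card ≤ ((Finset.range x).image G).card + ((Y x).image Int.toNat).card :=
                Finset.card_union_le _ _
            _ ≤ x + (A + B) := by
                have h1 : ((Finset.range x).image G).card ≤ x := by
                  calc ((Finset.range x).image G).card ≤ (Finset.range x).card :=
                        Finset.card_image_le
                    _ = x := Finset.card_range x
                have h2 : ((Y x).image Int.toNat).card ≤ A + B :=
                  le_trans Finset.card_image_le (hYcard x)
                omega
        have : ¬ (Finset.range (x + (A + B) + 1) ⊆ E) := by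
          intro hsub
          have := Finset.card_le_card hsub
          rw [Finset.card_range] at this
          omega
        obtain ⟨n, hn, hnE⟩ := Finset.not_subset.mp this
        rw [Finset.mem_range] at hn
        have hnS : n ∈ {n : ℕ | (∀ x' < x, G x' ≠ n) ∧ (n : ℤ) ∉ Y x} := by
          constructor
          · intro a ha hGa
            exact hnE (Finset.mem_union_left _
              (Finset.mem_image.mpr ⟨a, Finset.mem_range.mpr ha, hGa⟩))
          · intro hmem
            apply hnE
            have : ((n : ℤ)).toNat ∈ (Y x).image Int.toNat :=
              Finset.mem_image.mpr ⟨_, hmem, rfl⟩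
            rw [Int.toNat_natCast] at this
            exact Finset.mem_union_right _ this
        have : G x ≤ n := by rw [hG x hx]; exact Nat.sInf_le hnS
        omega
    -- counting missing values
    have hUcard : ∀ x : ℕ, ((Finset.range x).image G).card = x := by
      intro x
      rw [Finset.card_image_of_injective _ hGinj, Finset.card_range]
    have hUsub : ∀ x : ℕ, (Finset.range x).image G ⊆ Finset.range (x + C) := by
      intro x v hv
      obtain ⟨a, ha, rfl⟩ := Finset.mem_image.mp hv
      rw [Finset.mem_range] at ha ⊢
      have := hCup a
      omega
    have hMissCard : ∀ x : ℕ, (Finset.range (x + C) \ (Finset.range x).image G).card = C := by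
      intro x
      rw [Finset.card_sdiff_of_subset (hUsub x), Finset.card_range, hUcard]
      omega
    -- the least missing value
    set m : ℕ → ℕ := fun x => sInf {n : ℕ | ∀ a < x, G a ≠ n} with hmdef
    have hmne : ∀ x : ℕ, {n : ℕ | ∀ a < x, G a ≠ n}.Nonempty := by
      intro x
      refine ⟨((Finset.range x).image G).sup id + 1, fun a ha hGa => ?_⟩
      have : G a ∈ (Finset.range x).image G :=
        Finset.mem_image.mpr ⟨a, Finset.mem_range.mpr ha, rfl⟩
      have := sup_mem_of_ne _ this
      omega
    have hmMiss : ∀ x : ℕ, ∀ a < x, G a ≠ m x := fun x => Nat.sInf_mem (hmne x)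
    have hmLow : ∀ x : ℕ, ∀ n < m x, ∃ a < x, G a = n := by
      intro x n hn
      have := Nat.notMem_of_lt_sInf hn
      simp only [Set.mem_setOf_eq, not_forall, not_not] at this
      obtain ⟨a, ha, h⟩ := this
      exact ⟨a, ha, h⟩
    have hmmono : ∀ x : ℕ, m x ≤ m (x + 1) :=
      fun x => Nat.sInf_le (fun a ha => hmMiss (x + 1) a (by omega))
    have hmmono2 : ∀ a b : ℕ, a ≤ b → m a ≤ m b := by
      intro a b hab
      induction b, hab using Nat.le_induction with
      | base => exact le_rfl
      | succ b hb ih => exact le_trans ih (hmmono b)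
    have hmtake : ∀ x : ℕ, L ≤ x → m x + A ≤ x → G x = m x := by
      intro x hx hmx
      rw [hG x hx]
      apply le_antisymm
      · apply Nat.sInf_le
        refine ⟨hmMiss x, fun hmem => ?_⟩
        have := hY_low x (m x) hmem
        omega
      · by_contra hlt
        push_neg at hlt
        have hmem := Nat.sInf_mem (hSne x)
        obtain ⟨a, ha, hGa⟩ := hmLow x _ hlt
        exact hmem.1 a ha hGa
    have hmstep : ∀ x : ℕ, L ≤ x → x ≤ m x + A → x + 1 ≤ m (x + 1) + A := by
      intro x hx hmx
      rcases lt_or_eq_of_le hmx with h | h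
      · have := hmmono x; omega
      · have hGx : G x = m x := hmtake x hx (by omega)
        have h1 := hmmono x
        have h2 : m (x + 1) ≠ m x := by
          intro heq
          exact hmMiss (x + 1) x (by omega) (by rw [hGx, heq])
        omega
    -- reaching the lower window
    have hreach : ∀ t : ℕ, L ≤ t → ∃ s, t ≤ s ∧ s ≤ t + C ∧ s ≤ m s + A := by
      intro t ht
      by_contra hcon
      push_neg at hcon
      have key : ∀ i ≤ C, m t + i ≤ m (t + i) := by
        intro i hi
        induction i with
        | zero => simp
        | succ i ih =>
          have hih := ih (by omega)
          have hs : m (t + i) + A < t + i := hcon (t + i) (by omega) (by omega)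
          have hGs : G (t + i) = m (t + i) := hmtake (t + i) (by omega) (by omega)
          have h1 := hmmono (t + i)
          have h2 : m (t + i + 1) ≠ m (t + i) := by
            intro heq
            exact hmMiss (t + i + 1) (t + i) (by omega) (by rw [hGs, heq])
          have : t + (i + 1) = (t + i) + 1 := by omega
          rw [this]
          omega
      -- the C+1 values m (t+i), i = 0..C are distinct missing values below t + C
      have hsub : (Finset.range (C + 1)).image (fun i => m (t + i)) ⊆
          Finset.range (t + C) \ (Finset.range t).image G := by
        intro v hv
        obtain ⟨i, hi, rfl⟩ := Finset.mem_image.mp hv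
        rw [Finset.mem_range] at hi
        rw [Finset.mem_sdiff, Finset.mem_range]
        constructor
        · have := hcon (t + i) (by omega) (by omega)
          omega
        · intro hmem
          obtain ⟨a, ha, hGa⟩ := Finset.mem_image.mp hmem
          rw [Finset.mem_range] at ha
          exact hmMiss (t + i) a (by omega) hGa
      have hinj : Set.InjOn (fun i => m (t + i)) (Finset.range (C + 1)) := by
        intro i hi j hj hij
        rw [Finset.coe_range, Set.mem_Iio] at hi hj
        by_contra hne
        rcases lt_or_gt_of_ne hne with h | h
        · have h1 := key (i + 1) (by omega)
          have h2 := hmmono2 (t + (i + 1)) (t + j) (by omega)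
          have h3 := key i (by omega)
          have h4 : m (t + i) < m (t + i + 1) := by
            have hs : m (t + i) + A < t + i := by
              have := hcon (t + i) (by omega) (by omega); omega
            have hGs : G (t + i) = m (t + i) := hmtake (t + i) (by omega) (by omega)
            have h5 := hmmono (t + i)
            have h6 : m (t + i + 1) ≠ m (t + i) := by
              intro heq
              exact hmMiss (t + i + 1) (t + i) (by omega) (by rw [hGs, heq])
            omega
          have : t + (i + 1) = t + i + 1 := by omega
          rw [this] at h2
          simp only at hij
          omega
        · have h1 := key (j + 1) (by omega)
          have h2 := hmmono2 (t + (j + 1)) (t + i) (by omega)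
          have h4 : m (t + j) < m (t + j + 1) := by
            have hs : m (t + j) + A < t + j := by
              have := hcon (t + j) (by omega) (by omega); omega
            have hGs : G (t + j) = m (t + j) := hmtake (t + j) (by omega) (by omega)
            have h5 := hmmono (t + j)
            have h6 : m (t + j + 1) ≠ m (t + j) := by
              intro heq
              exact hmMiss (t + j + 1) (t + j) (by omega) (by rw [hGs, heq])
            omega
          have : t + (j + 1) = t + j + 1 := by omega
          rw [this] at h2
          simp only at hij
          omega
      have hcard1 : ((Finset.range (C + 1)).image (fun i => m (t + i))).card = C + 1 := by
        rw [Finset.card_image_of_injOn hinj, Finset.card_range]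
      have := Finset.card_le_card hsub
      rw [hcard1, hMissCard t] at this
      omega
    obtain ⟨s0, hs0L, _, hs0⟩ := hreach L le_rfl
    have hs0L' : L ≤ s0 := hs0L
    have hlow0 : ∀ x, s0 ≤ x → x ≤ m x + A := by
      intro x hx
      induction x, hx using Nat.le_induction with
      | base => exact hs0
      | succ x hx ih => exact hmstep x (le_trans hs0L' hx) ih
    have hlow : ∀ x, s0 ≤ x → ∀ n, n + A < x → ∃ a < x, G a = n := by
      intro x hx n hn
      have := hlow0 x hx
      exact hmLow x n (by omega)
    -- upper window: "bad" values eventually disappear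
    have hup1 : ∀ x, L ≤ x → ∀ v, x + B ≤ v → v < G x → ∃ a < x, G a = v := by
      intro x hx v hv hvG
      rcases hGleast x hx v hvG with h | h
      · exact h
      · have := hY_up x v h
        omega
    set badF : ℕ → Finset ℕ := fun x => ((Finset.range x).image G).filter (fun v => x + B ≤ v)
      with hbadF
    have hbadstep : ∀ x, L ≤ x → badF x = ∅ → badF (x + 1) = ∅ := by
      intro x hx hempty
      have hGxB : G x ≤ x + B := by
        by_contra hcon
        push_neg at hcon
        obtain ⟨a, ha, hGa⟩ := hup1 x hx (x + B) le_rfl hcon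
        have : x + B ∈ badF x := Finset.mem_filter.mpr
          ⟨Finset.mem_image.mpr ⟨a, Finset.mem_range.mpr ha, hGa⟩, le_rfl⟩
        rw [hempty] at this
        exact absurd this (Finset.notMem_empty _)
      rw [Finset.eq_empty_iff_forall_notMem]
      intro v hv
      rw [Finset.mem_filter, Finset.mem_image] at hv
      obtain ⟨⟨a, ha, hGa⟩, hvB⟩ := hv
      rw [Finset.mem_range] at ha
      rcases Nat.lt_succ_iff_lt_or_eq.mp ha with ha' | rfl
      · have : v ∈ badF x := Finset.mem_filter.mpr
          ⟨Finset.mem_image.mpr ⟨a, Finset.mem_range.mpr ha', hGa⟩, by omega⟩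
        rw [hempty] at this
        exact absurd this (Finset.notMem_empty _)
      · omega
    have hbadempty : ∃ x2, s0 ≤ x2 ∧ badF x2 = ∅ := by
      by_contra hcon
      push_neg at hcon
      have hne : ∀ x, s0 ≤ x → (badF x).Nonempty := by
        intro x hx
        exact hcon x hx
      set M : ℕ → ℕ := fun x => (badF x).sup id with hMdef
      have hMmem : ∀ x, s0 ≤ x → M x ∈ badF x := by
        intro x hx
        obtain ⟨b, hb, hbe⟩ := Finset.exists_mem_eq_sup (badF x) (hne x hx) id
        rw [hMdef]
        simp only
        rw [hbe]
        exact hb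
      have hMle : ∀ x v, v ∈ badF x → v ≤ M x := fun x v hv => Finset.le_sup (f := id) hv
      have hMband : ∀ x, s0 ≤ x → x + B ≤ M x ∧ ∃ a < x, G a = M x := by
        intro x hx
        have := hMmem x hx
        rw [Finset.mem_filter, Finset.mem_image] at this
        obtain ⟨⟨a, ha, hGa⟩, hband⟩ := this
        exact ⟨hband, a, Finset.mem_range.mp ha, hGa⟩
      have hGM : ∀ x, s0 ≤ x → G x ≤ M x + 1 := by
        intro x hx
        rcases le_or_gt (G x) (x + B) with h | h
        · have := (hMband x hx).1; omega
        · obtain ⟨a, ha, hGa⟩ := hup1 x (le_trans hs0L' hx) (G x - 1) (by omega) (by omega)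
          have : G x - 1 ∈ badF x := Finset.mem_filter.mpr
            ⟨Finset.mem_image.mpr ⟨a, Finset.mem_range.mpr ha, hGa⟩, by omega⟩
          have := hMle x _ this
          omega
      have hMstep : ∀ x, s0 ≤ x → M (x + 1) ≤ M x + 1 := by
        intro x hx
        have hmem := hMmem (x + 1) (by omega)
        rw [Finset.mem_filter, Finset.mem_image] at hmem
        obtain ⟨⟨a, ha, hGa⟩, hband⟩ := hmem
        rw [Finset.mem_range] at ha
        rcases Nat.lt_succ_iff_lt_or_eq.mp ha with ha' | rfl
        · have : M (x + 1) ∈ badF x := Finset.mem_filter.mpr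
            ⟨Finset.mem_image.mpr ⟨a, Finset.mem_range.mpr ha', hGa⟩, by omega⟩
          have := hMle x _ this
          omega
        · have := hGM a hx
          omega
      set g : ℕ → ℕ := fun x => M x - x with hgdef
      have hgstep : ∀ x, s0 ≤ x → g (x + 1) ≤ g x := by
        intro x hx
        have h1 := hMstep x hx
        have h2 := (hMband x hx).1
        simp only [hgdef]
        omega
      obtain ⟨x3, hx3s0, hx3⟩ := ev_const g s0 hgstep
      have hgeq : ∀ x, g x = M x - x := fun _ => rfl
      have hMlin : ∀ x, x3 ≤ x → M x = x + g x3 := by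
        intro x hx
        have h1 := hx3 x hx
        rw [hgeq x, hgeq x3] at h1
        have h2 := (hMband x (le_trans hx3s0 hx)).1
        have h3 := (hMband x3 hx3s0).1
        have h4 : g x3 = M x3 - x3 := hgeq x3
        omega
      have hGlin : ∀ x, x3 ≤ x → G x = x + g x3 + 1 := by
        intro x hx
        have hmem := hMmem (x + 1) (by omega)
        rw [Finset.mem_filter, Finset.mem_image] at hmem
        obtain ⟨⟨a, ha, hGa⟩, hband⟩ := hmem
        rw [Finset.mem_range] at ha
        have hM1 : M (x + 1) = M x + 1 := by
          rw [hMlin x hx, hMlin (x + 1) (by omega)]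
          omega
        have hax : a = x := by
          rcases Nat.lt_succ_iff_lt_or_eq.mp ha with ha' | h
          · exfalso
            have h2 := (hMband x (le_trans hx3s0 hx)).1
            have hmem2 : M (x + 1) ∈ badF x := Finset.mem_filter.mpr
              ⟨Finset.mem_image.mpr ⟨a, Finset.mem_range.mpr ha', hGa⟩, by omega⟩
            have := hMle x _ hmem2
            omega
          · exact h
        subst hax
        have h5 := hMlin a hx
        omega
      -- contradiction with surjectivity
      set c := g x3 + 1 with hcdef
      have hTcard : 1 ≤ (Finset.range (x3 + c) \ (Finset.range x3).image G).card := by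
        have h1 := Finset.le_card_sdiff ((Finset.range x3).image G) (Finset.range (x3 + c))
        have h2 : ((Finset.range x3).image G).card ≤ x3 :=
          le_trans Finset.card_image_le (by rw [Finset.card_range])
        rw [Finset.card_range] at h1
        omega
      have hTpos : 0 < (Finset.range (x3 + c) \ (Finset.range x3).image G).card := by omega
      obtain ⟨n, hn⟩ := Finset.card_pos.mp hTpos
      rw [Finset.mem_sdiff, Finset.mem_range] at hn
      obtain ⟨hn1, hn2⟩ := hn
      obtain ⟨a, hGa⟩ := hbij.2 n
      rcases lt_or_ge a x3 with ha | ha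
      · exact hn2 (Finset.mem_image.mpr ⟨a, Finset.mem_range.mpr ha, hGa⟩)
      · have := hGlin a ha
        omega
    obtain ⟨x2, hx2s0, hx2bad⟩ := hbadempty
    have hbadall : ∀ x, x2 ≤ x → badF x = ∅ := by
      intro x hx
      induction x, hx using Nat.le_induction with
      | base => exact hx2bad
      | succ x hx ih => exact hbadstep x (le_trans hs0L' (le_trans hx2s0 hx)) ih
    have hupper : ∀ x, x2 ≤ x → ∀ a < x, G a < x + B := by
      intro x hx a ha
      by_contra hcon
      push_neg at hcon
      have : G a ∈ badF x := Finset.mem_filter.mpr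
        ⟨Finset.mem_image.mpr ⟨a, Finset.mem_range.mpr ha, rfl⟩, hcon⟩
      rw [hbadall x hx] at this
      exact absurd this (Finset.notMem_empty _)
    -- the window state
    set X2 := x2 + A + 1 with hX2def
    have hX2A : A + 1 ≤ X2 := by omega
    have hX2L : L ≤ X2 := by omega
    have hWlow : ∀ x, X2 ≤ x → ∀ n, n + A < x → ∃ a < x, G a = n := by
      intro x hx n hn
      exact hlow x (by omega) n hn
    have hWup : ∀ x, X2 ≤ x → ∀ a < x, G a < x + B := by
      intro x hx a ha
      exact hupper x (by omega) a ha
    set D : ℕ → Finset ℕ := fun x =>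
      (((Finset.range x).image G).filter (fun v => x ≤ v + A)).image (fun v => v + A - x)
      with hDdef
    have hDsub : ∀ x, X2 ≤ x → D x ⊆ Finset.range (A + B) := by
      intro x hx j hj
      simp only [hDdef, Finset.mem_image, Finset.mem_filter] at hj
      obtain ⟨v, ⟨⟨a, ha, hGa⟩, hvA⟩, rfl⟩ := hj
      rw [Finset.mem_range] at ha
      have := hWup x hx a ha
      rw [Finset.mem_range]
      omega
    have hDcard : ∀ x, X2 ≤ x → (D x).card = A := by
      intro x hx
      have hfeq : ((Finset.range x).image G).filter (fun v => x ≤ v + A) =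
          (Finset.range x).image G \ Finset.range (x - A) := by
        ext v
        rw [Finset.mem_filter, Finset.mem_sdiff, Finset.mem_range]
        constructor
        · rintro ⟨h1, h2⟩; exact ⟨h1, by omega⟩
        · rintro ⟨h1, h2⟩; exact ⟨h1, by omega⟩
      have hrsub : Finset.range (x - A) ⊆ (Finset.range x).image G := by
        intro n hn
        rw [Finset.mem_range] at hn
        obtain ⟨a, ha, hGa⟩ := hWlow x hx n (by omega)
        exact Finset.mem_image.mpr ⟨a, Finset.mem_range.mpr ha, hGa⟩
      have hinj : Set.InjOn (fun v => v + A - x)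
          (((Finset.range x).image G).filter (fun v => x ≤ v + A)) := by
        intro v hv w hw hvw
        rw [Finset.coe_filter] at hv hw
        simp only [Set.mem_setOf_eq] at hv hw
        simp only at hvw
        omega
      simp only [hDdef]
      rw [Finset.card_image_of_injOn hinj, hfeq, Finset.card_sdiff_of_subset hrsub,
        Finset.card_range, hUcard]
      omega
    have hdecode : ∀ x, X2 ≤ x → ∀ n, x ≤ n + A →
        ((∃ a < x, G a = n) ↔ (n + A - x) ∈ D x) := by
      intro x hx n hn
      constructor
      · rintro ⟨a, ha, rfl⟩
        simp only [hDdef, Finset.mem_image, Finset.mem_filter]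
        exact ⟨G a, ⟨⟨a, Finset.mem_range.mpr ha, rfl⟩, hn⟩, rfl⟩
      · intro hj
        simp only [hDdef, Finset.mem_image, Finset.mem_filter] at hj
        obtain ⟨v, ⟨⟨a, ha, hGa⟩, hvA⟩, hveq⟩ := hj
        have hv : v = n := by omega
        subst hv
        exact ⟨a, Finset.mem_range.mp ha, hGa⟩
    -- pigeonhole on the states
    set N := (A + B).choose A with hNdef
    have hpigeon : ∃ r r' : ℕ, r < r' ∧ r' ≤ N ∧ D (X2 + r * p) = D (X2 + r' * p) := by
      have hmaps : ∀ r ∈ Finset.range (N + 1),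
          D (X2 + r * p) ∈ (Finset.range (A + B)).powersetCard A := by
        intro r _
        rw [Finset.mem_powersetCard]
        exact ⟨hDsub _ (by omega), hDcard _ (by omega)⟩
      have hcard : ((Finset.range (A + B)).powersetCard A).card <
          (Finset.range (N + 1)).card := by
        rw [Finset.card_powersetCard, Finset.card_range, Finset.card_range]
        omega
      obtain ⟨a, ha, b, hb, hab, heq⟩ :=
        Finset.exists_ne_map_eq_of_card_lt_of_maps_to hcard hmaps
      rw [Finset.mem_range] at ha hb
      rcases lt_or_gt_of_ne hab with h | h
      · exact ⟨a, b, h, by omega, heq⟩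
      · exact ⟨b, a, h, by omega, heq.symm⟩
    obtain ⟨r, r', hrr', hr'N, hDeq⟩ := hpigeon
    set x0 := X2 + r * p with hx0def
    set q := (r' - r) * p with hqdef
    have hq1 : 1 ≤ q := by
      have : 1 ≤ r' - r := by omega
      calc 1 = 1 * 1 := by ring
        _ ≤ (r' - r) * p := Nat.mul_le_mul this hp
    have hqN : q ≤ N * p := Nat.mul_le_mul (by omega) le_rfl
    have hx0q : x0 + q = X2 + r' * p := by
      have : r * p + (r' - r) * p = r' * p := by
        rw [← Nat.add_mul, Nat.add_sub_cancel' (le_of_lt hrr')]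
      omega
    -- periodicity of Y over multiples of p
    have hperk : ∀ k x : ℕ, Y (x + k * p) = (Y x).image (fun y => y + ((k * p : ℕ) : ℤ)) := by
      intro k
      induction k with
      | zero =>
        intro x
        simp
      | succ k ih =>
        intro x
        have h1 : x + (k + 1) * p = (x + k * p) + p := by ring
        rw [h1, hper, ih, Finset.image_image]
        apply Finset.image_congr
        intro y _
        simp only [Function.comp_apply]
        push_cast
        ring
    have hYq : ∀ x : ℕ, ∀ n : ℕ, ((n : ℤ) ∈ Y x ↔ ((n + q : ℕ) : ℤ) ∈ Y (x + q)) := by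
      intro x n
      have : x + q = x + (r' - r) * p := rfl
      rw [this, hperk (r' - r) x]
      rw [Finset.mem_image]
      constructor
      · intro h
        exact ⟨n, h, by push_cast [hqdef]; ring⟩
      · rintro ⟨y, hy, hyeq⟩
        have : y = (n : ℤ) := by push_cast [hqdef] at hyeq ⊢; omega
        rwa [this] at hy
    -- the transfer invariant
    set Inv : ℕ → Prop := fun x =>
      ∀ n : ℕ, x ≤ n + A → ((∃ a < x, G a = n) ↔ (∃ a < x + q, G a = n + q)) with hInvdef
    have hInv0 : Inv x0 := by
      intro n hn
      rcases lt_or_ge n (x0 + B) with hbig | hbig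
      · rw [hdecode x0 (by omega) n hn, hdecode (x0 + q) (by omega) (n + q) (by omega)]
        have h1 : n + q + A - (x0 + q) = n + A - x0 := by omega
        rw [← hx0q] at hDeq
        rw [h1, hDeq]
      · constructor
        · rintro ⟨a, ha, rfl⟩
          have := hWup x0 (by omega) a ha
          omega
        · rintro ⟨a, ha, hGa⟩
          have := hWup (x0 + q) (by omega) a ha
          omega
    have hGstep : ∀ x, x0 ≤ x → Inv x → G (x + q) = G x + q := by
      intro x hx hI
      have hxX2 : X2 ≤ x := by omega
      have hxL : L ≤ x := by omega
      have hxqL : L ≤ x + q := by omega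
      have hnA : x ≤ G x + A := by
        by_contra hcon
        push_neg at hcon
        obtain ⟨a, ha, hGa⟩ := hWlow x hxX2 (G x) (by omega)
        exact absurd (hGinj hGa) (by omega)
      have key1 : ∀ a < x + q, G a ≠ G x + q := by
        have hnot : ¬ (∃ a < x, G a = G x) := by
          rintro ⟨a, ha, hGa⟩
          exact absurd (hGinj hGa) (by omega)
        have hnotq : ¬ ∃ a < x + q, G a = G x + q := ((hI (G x) hnA).not).mp hnot
        intro a ha hGa
        exact hnotq ⟨a, ha, hGa⟩
      have key2 : ((G x + q : ℕ) : ℤ) ∉ Y (x + q) := by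
        intro hmem
        exact (hGmem x hxL).2 ((hYq x (G x)).mpr hmem)
      have key3 : ∀ w < G x + q, (∃ a < x + q, G a = w) ∨ (w : ℤ) ∈ Y (x + q) := by
        intro w hw
        rcases lt_or_ge (w + A) (x + q) with h1 | h1
        · exact Or.inl (hWlow (x + q) (by omega) w h1)
        · have hwq : q ≤ w := by omega
          set w' := w - q with hw'def
          have hw'x : x ≤ w' + A := by omega
          have hw'n : w' < G x := by omega
          have hweq : w = w' + q := by omega
          rcases hGleast x hxL w' hw'n with h | h
          · left
            rw [hweq]
            exact (hI w' hw'x).mp h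
          · right
            rw [hweq]
            exact (hYq x w').mp h
      rw [hG (x + q) hxqL]
      apply le_antisymm
      · exact Nat.sInf_le ⟨key1, key2⟩
      · by_contra hlt
        push_neg at hlt
        have hmem := Nat.sInf_mem (hSne (x + q))
        rcases key3 _ hlt with ⟨a, ha, hGa⟩ | h
        · exact hmem.1 a ha hGa
        · exact hmem.2 h
    have hInvStep : ∀ x, x0 ≤ x → Inv x → Inv (x + 1) := by
      intro x hx hI n hn
      have hGq := hGstep x hx hI
      constructor
      · rintro ⟨a, ha, rfl⟩
        rcases Nat.lt_succ_iff_lt_or_eq.mp ha with ha' | rfl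
        · obtain ⟨b, hb, hGb⟩ := (hI (G a) (by omega)).mp ⟨a, ha', rfl⟩
          exact ⟨b, by omega, hGb⟩
        · exact ⟨a + q, by omega, by rw [hGq]⟩
      · rintro ⟨b, hb, hGb⟩
        rcases Nat.lt_succ_iff_lt_or_eq.mp (show b < (x + q) + 1 by omega) with hb' | rfl
        · obtain ⟨a, ha, hGa⟩ := (hI n (by omega)).mpr ⟨b, hb', hGb⟩
          exact ⟨a, by omega, hGa⟩
        · refine ⟨x, by omega, ?_⟩
          rw [hGq] at hGb
          omega
    have hInvAll : ∀ x, x0 ≤ x → Inv x := by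
      intro x hx
      induction x, hx using Nat.le_induction with
      | base => exact hInv0
      | succ x hx ih => exact hInvStep x hx ih
    -- conclusion
    have hNmin : N = (A + B).choose (min A B) := by
      rcases le_total A B with h | h
      · rw [min_eq_left h]
      · rw [min_eq_right h, hNdef]
        have := Nat.choose_symm (show A ≤ A + B by omega)
        have heq : A + B - A = B := by omega
        rw [heq] at this
        exact this.symm
    refine ⟨x0, q, hq1, ?_, fun x hx => hGstep x hx (hInvAll x hx)⟩
    calc q ≤ N * p := hqN
      _ = (A + B).choose (min A B) * p := by rw [hNmin]
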